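/- Let X₁, …, Xₙ be independent random variables on a probability space, each almost surely positive, let a₁, …, aₙ > 0, let Y = ∑_{i=1}^n aᵢ·Xᵢ, let μ be the law of Y, and let g(x) = ∫ (ε/2)·exp(−ε·|x|) dμ(ε). Then for every γ > 0 the usefulness of the mixture Laplace mechanism driven by μ satisfies ∫_{−γ}^{γ} g(x) dx = 1 − ∏_{i=1}^n M_{Xᵢ}(−aᵢ·γ), where M_{Xᵢ}(t) = E[exp(t·Xᵢ)]. -/

import Mathlib

open MeasureTheory Real ProbabilityTheory

lemma lapInt {ε γ : ℝ} (hγ : 0 < γ) :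
    ∫ x in Set.Icc (-γ) γ, (ε / 2) * Real.exp (-(ε * |x|)) = 1 - Real.exp (-(ε * γ)) := by
  have hcont : Continuous fun x : ℝ => (ε / 2) * Real.exp (-(ε * |x|)) := by
    fun_prop
  have hle : (-γ : ℝ) ≤ γ := by linarith
  rw [MeasureTheory.integral_Icc_eq_integral_Ioc,
    ← intervalIntegral.integral_of_le hle]
  have h1 : IntervalIntegrable (fun x : ℝ => (ε / 2) * Real.exp (-(ε * |x|)))
      volume (-γ) 0 := hcont.intervalIntegrable _ _
  have h2 : IntervalIntegrable (fun x : ℝ => (ε / 2) * Real.exp (-(ε * |x|)))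
      volume 0 γ := hcont.intervalIntegrable _ _
  rw [← intervalIntegral.integral_add_adjacent_intervals h1 h2]
  have hL : (∫ x in (-γ)..0, (ε / 2) * Real.exp (-(ε * |x|)))
      = ∫ x in (-γ)..0, (ε / 2) * Real.exp (ε * x) := by
    apply intervalIntegral.integral_congr
    intro x hx
    rw [Set.uIcc_of_le (by linarith)] at hx
    simp only [abs_of_nonpos hx.2]
    ring_nf
  have hR : (∫ x in (0:ℝ)..γ, (ε / 2) * Real.exp (-(ε * |x|)))
      = ∫ x in (0:ℝ)..γ, (ε / 2) * Real.exp (-(ε * x)) := by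
    apply intervalIntegral.integral_congr
    intro x hx
    rw [Set.uIcc_of_le (by linarith)] at hx
    simp only [abs_of_nonneg hx.1]
  have hLval : (∫ x in (-γ)..0, (ε / 2) * Real.exp (ε * x))
      = 1/2 - (1/2) * Real.exp (-(ε * γ)) := by
    have : ∀ x ∈ Set.uIcc (-γ) 0, HasDerivAt (fun y : ℝ => (1/2) * Real.exp (ε * y))
        ((ε / 2) * Real.exp (ε * x)) x := by
      intro x _
      have h := ((hasDerivAt_id x).const_mul ε).exp.const_mul (1/2 : ℝ)
      simpa using h.congr_deriv (by simp only [id_eq]; ring)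
    rw [intervalIntegral.integral_eq_sub_of_hasDerivAt this
      (((by fun_prop : Continuous fun x : ℝ => (ε / 2) * Real.exp (ε * x))).intervalIntegrable _ _)]
    simp [Real.exp_zero, mul_neg]
  have hRval : (∫ x in (0:ℝ)..γ, (ε / 2) * Real.exp (-(ε * x)))
      = 1/2 - (1/2) * Real.exp (-(ε * γ)) := by
    have : ∀ x ∈ Set.uIcc (0:ℝ) γ, HasDerivAt (fun y : ℝ => -(1/2) * Real.exp (-(ε * y)))
        ((ε / 2) * Real.exp (-(ε * x))) x := by
      intro x _
      have h := (((hasDerivAt_id x).const_mul ε).neg).exp.const_mul (-(1/2) : ℝ)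
      simpa using h.congr_deriv (by simp only [id_eq, Pi.neg_apply]; ring)
    rw [intervalIntegral.integral_eq_sub_of_hasDerivAt this
      (((by fun_prop : Continuous fun x : ℝ => (ε / 2) * Real.exp (-(ε * x)))).intervalIntegrable _ _)]
    simp [Real.exp_zero]
    ring
  rw [hL, hR, hLval, hRval]; ring

theorem mixture_laplace_linear_combination_usefulness
    {Ω : Type*} [MeasureSpace Ω] [IsProbabilityMeasure (ℙ : Measure Ω)]
    (n : ℕ) (X : Fin n → Ω → ℝ)
    (hXmeas : ∀ i, Measurable (X i))
    (hXindep : iIndepFun X ℙ)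
    (hXpos : ∀ i, ∀ᵐ ω ∂(ℙ : Measure Ω), 0 < X i ω)
    (a : Fin n → ℝ) (ha : ∀ i, 0 < a i)
    (M : Fin n → ℝ → ℝ)
    (hM : ∀ i, ∀ t : ℝ, M i t = ∫ ω, Real.exp (t * X i ω))
    (Y : Ω → ℝ) (hY : ∀ ω, Y ω = ∑ i, a i * X i ω)
    (μ : Measure ℝ) (hμ : μ = Measure.map Y ℙ)
    (g : ℝ → ℝ)
    (hg : ∀ x : ℝ, g x = ∫ ε, (ε / 2) * Real.exp (-(ε * |x|)) ∂μ)
    (γ : ℝ) (hγ : 0 < γ) :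
    ∫ x in Set.Icc (-γ) γ, g x = 1 - ∏ i, M i (-(a i * γ)) := by
  have hYmeas : Measurable Y := by
    have hYe : Y = fun ω => ∑ i, a i * X i ω := funext hY
    rw [hYe]
    exact Finset.measurable_sum _ fun i _ => (hXmeas i).const_mul _
  haveI hμprob : IsProbabilityMeasure μ := by
    rw [hμ]; exact Measure.isProbabilityMeasure_map hYmeas.aemeasurable
  have hYpos : ∀ᵐ ω ∂(ℙ : Measure Ω), 0 ≤ Y ω := by
    have hall : ∀ᵐ ω ∂(ℙ : Measure Ω), ∀ i, 0 < X i ω := ae_all_iff.2 hXpos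
    filter_upwards [hall] with ω hω
    rw [hY]
    exact Finset.sum_nonneg fun i _ => le_of_lt (mul_pos (ha i) (hω i))
  have haeε : ∀ᵐ ε ∂μ, 0 ≤ ε := by
    rw [hμ, MeasureTheory.ae_map_iff hYmeas.aemeasurable measurableSet_Ici]
    exact hYpos
  -- integrability on the product
  have hFcont : Continuous (Function.uncurry fun x ε : ℝ => (ε / 2) * Real.exp (-(ε * |x|))) := by
    show Continuous fun p : ℝ × ℝ => (p.2 / 2) * Real.exp (-(p.2 * |p.1|))
    fun_prop
  have hFint : Integrable (Function.uncurry fun x ε => (ε / 2) * Real.exp (-(ε * |x|)))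
      ((volume.restrict (Set.Icc (-γ) γ)).prod μ) := by
    rw [MeasureTheory.integrable_prod_iff' hFcont.aestronglyMeasurable]
    constructor
    · refine Filter.Eventually.of_forall fun ε => ?_
      exact (Continuous.integrableOn_Icc (by fun_prop))
    · apply MeasureTheory.Integrable.congr
        (f := fun ε : ℝ => 1 - Real.exp (-(ε * γ)))
      · refine MeasureTheory.Integrable.mono' (integrable_const 1) ?_ ?_
        · exact (continuous_const.sub (by fun_prop : Continuous fun ε : ℝ =>
            Real.exp (-(ε * γ)))).aestronglyMeasurable
        · filter_upwards [haeε] with ε hε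
          have h1 : Real.exp (-(ε * γ)) ≤ 1 :=
            Real.exp_le_one_iff.mpr (by nlinarith)
          have h2 := Real.exp_pos (-(ε * γ))
          rw [Real.norm_eq_abs, abs_le]
          constructor <;> linarith
      · filter_upwards [haeε] with ε hε
        rw [← lapInt hγ]
        refine integral_congr_ae (Filter.Eventually.of_forall fun x => ?_)
        simp only [Function.uncurry]
        rw [Real.norm_eq_abs, abs_of_nonneg
          (mul_nonneg (by linarith) (Real.exp_nonneg _))]
  -- integrability of exp(-(ε γ))
  have hexpint : Integrable (fun ε : ℝ => Real.exp (-(ε * γ))) μ := by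
    refine MeasureTheory.Integrable.mono' (integrable_const 1) ?_ ?_
    · exact (by fun_prop : Continuous fun ε : ℝ => Real.exp (-(ε * γ))).aestronglyMeasurable
    · filter_upwards [haeε] with ε hε
      rw [Real.norm_eq_abs, abs_of_nonneg (Real.exp_nonneg _)]
      exact Real.exp_le_one_iff.mpr (by nlinarith)
  -- the exp integral equals the product of mgfs
  have key : ∫ ε, Real.exp (-(ε * γ)) ∂μ = ∏ i, M i (-(a i * γ)) := by
    have hcont : Continuous fun ε : ℝ => Real.exp (-(ε * γ)) := by fun_prop
    rw [hμ, integral_map hYmeas.aemeasurable hcont.aestronglyMeasurable]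
    set Z : Fin n → Ω → ℝ := fun i ω => a i * X i ω with hZ
    have hZmeas : ∀ i, Measurable (Z i) := fun i => (hXmeas i).const_mul _
    have hZindep : iIndepFun Z ℙ :=
      hXindep.comp (fun i x => a i * x) fun i => measurable_const_mul _
    have h1 : ∫ ω, Real.exp (-(Y ω * γ)) ∂ℙ = mgf (∑ i, Z i) ℙ (-γ) := by
      simp only [mgf]
      refine integral_congr_ae (Filter.Eventually.of_forall fun ω => ?_)
      simp only [Finset.sum_apply]
      rw [show (∑ i, Z i ω) = Y ω from (hY ω).symm]
      congr 1
      ring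
    rw [h1, hZindep.mgf_sum hZmeas Finset.univ]
    refine Finset.prod_congr rfl fun i _ => ?_
    rw [hM i, mgf]
    refine integral_congr_ae (Filter.Eventually.of_forall fun ω => ?_)
    simp only [hZ]
    ring_nf
  calc ∫ x in Set.Icc (-γ) γ, g x
      = ∫ x in Set.Icc (-γ) γ, ∫ ε, (ε / 2) * Real.exp (-(ε * |x|)) ∂μ := by
        exact integral_congr_ae (Filter.Eventually.of_forall fun x => hg x)
    _ = ∫ ε, (∫ x in Set.Icc (-γ) γ, (ε / 2) * Real.exp (-(ε * |x|))) ∂μ := by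
        exact integral_integral_swap hFint
    _ = ∫ ε, (1 - Real.exp (-(ε * γ))) ∂μ := by
        apply integral_congr_ae
        filter_upwards [haeε] with ε hε
        exact lapInt hγ
    _ = 1 - ∫ ε, Real.exp (-(ε * γ)) ∂μ := by
        rw [integral_sub (integrable_const 1) hexpint, integral_const]
        simp
    _ = 1 - ∏ i, M i (-(a i * γ)) := by rw [key]
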